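/- Let n ∈ ℕ and let s₁, …, sₙ ∈ ℂ with Re(s_j) > 0 for each j, and assume s_j + conj(s_k) ≠ 1 for all j, k. Then the n×n complex matrix whose (j,k) entry is 1/(s_j + conj(s_k) − 1) − ζ(s_j + conj(s_k))/(s_j + conj(s_k)) is positive semidefinite, where ζ is the Riemann zeta function. -/

import Mathlib

open Complex ComplexOrder MeasureTheory Set Filter

noncomputable def zker (s : ℂ) (u : ℝ) : ℂ := ((Int.fract u : ℝ) : ℂ) * (u : ℂ) ^ (-s - 1)

noncomputable def zI (s : ℂ) : ℂ := ∫ u in Ioi (1 : ℝ), zker s u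

lemma aesm_cpow (c : ℂ) :
    AEStronglyMeasurable (fun u : ℝ => (u : ℂ) ^ c) (volume.restrict (Ioi (1:ℝ))) := by
  refine ContinuousOn.aestronglyMeasurable (fun t ht => ?_) measurableSet_Ioi
  exact (Complex.continuousAt_ofReal_cpow_const _ _
    (Or.inr (one_pos.trans ht).ne')).continuousWithinAt

lemma aesm_fract :
    AEStronglyMeasurable (fun u : ℝ => ((Int.fract u : ℝ) : ℂ)) (volume.restrict (Ioi (1:ℝ))) :=
  (Complex.measurable_ofReal.comp measurable_fract).aestronglyMeasurable

lemma zker_meas (s : ℂ) : AEStronglyMeasurable (zker s) (volume.restrict (Ioi (1:ℝ))) :=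
  aesm_fract.mul (aesm_cpow _)

lemma re_neg_sub (s : ℂ) : (-s - 1).re = -s.re - 1 := by simp

lemma zker_norm_le {s : ℂ} {u : ℝ} (hu : 1 < u) : ‖zker s u‖ ≤ u ^ (-s.re - 1) := by
  have hu0 : (0:ℝ) < u := one_pos.trans hu
  rw [zker, norm_mul,
    Complex.norm_cpow_eq_rpow_re_of_pos hu0, Complex.norm_real, Real.norm_eq_abs, re_neg_sub]
  have h1 : |Int.fract u| ≤ 1 := by
    rw [_root_.abs_of_nonneg (Int.fract_nonneg u)]; exact (Int.fract_lt_one u).le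
  calc |Int.fract u| * u ^ (-s.re - 1) ≤ 1 * u ^ (-s.re - 1) :=
        mul_le_mul_of_nonneg_right h1 (Real.rpow_nonneg hu0.le _)
    _ = u ^ (-s.re - 1) := one_mul _

lemma zker_integrableOn {s : ℂ} (hs : 0 < s.re) : IntegrableOn (zker s) (Ioi (1:ℝ)) := by
  have h := integrableOn_Ioi_rpow_of_lt (show -s.re - 1 < -1 by linarith) one_pos
  refine Integrable.mono' h (zker_meas s) ?_
  filter_upwards [ae_restrict_mem measurableSet_Ioi] with u hu
  exact zker_norm_le hu
lemma integral_Ioi_inter_Ici {s : ℂ} (hs : 0 < s.re) {a : ℝ} (ha : 1 ≤ a) :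
    ∫ u in Ioi (1:ℝ) ∩ Ici a, (u:ℂ) ^ (-s - 1) = (a:ℂ) ^ (-s) / s := by
  have ha0 : (0:ℝ) < a := lt_of_lt_of_le one_pos ha
  have hset : (Ioi (1:ℝ) ∩ Ici a : Set ℝ) =ᵐ[volume] Ioi a := by
    have h1 : (Ioi (1:ℝ) ∩ Ici a : Set ℝ) =ᵐ[volume] (Ioi (1:ℝ) ∩ Ioi a : Set ℝ) :=
      ae_eq_set_inter (ae_eq_refl _) Ioi_ae_eq_Ici.symm
    rwa [Ioi_inter_Ioi, max_eq_right ha] at h1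
  rw [setIntegral_congr_set hset,
    integral_Ioi_cpow_of_lt (by rw [re_neg_sub]; linarith) ha0]
  have h2 : -s - 1 + 1 = -s := by ring
  rw [h2]
  rw [show -(a:ℂ) ^ (-s) / (-s) = -(a:ℂ) ^ (-s) / -s from rfl, neg_div_neg_eq]

lemma floor_integral {s : ℂ} (hs : 1 < s.re) :
    ∫ u in Ioi (1:ℝ), ((⌊u⌋₊ : ℝ) : ℂ) * (u:ℂ) ^ (-s - 1) = riemannZeta s / s := by
  have hs0 : 0 < s.re := lt_trans one_pos hs
  set F : ℕ → ℝ → ℂ := fun n u => indicator (Ici ((n:ℝ)+1)) (fun v : ℝ => (v:ℂ) ^ (-s-1)) u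
    with hF
  have hre : (-s - 1).re < -1 := by rw [re_neg_sub]; linarith
  have hint : ∀ n : ℕ, IntegrableOn (F n) (Ioi (1:ℝ)) := fun n =>
    (integrableOn_Ioi_cpow_of_lt hre one_pos).indicator measurableSet_Ici
  have hval : ∀ n : ℕ, ∫ u in Ioi (1:ℝ), F n u = ((n:ℂ) + 1) ^ (-s) / s := by
    intro n
    rw [hF]
    simp only
    rw [setIntegral_indicator measurableSet_Ici,
      integral_Ioi_inter_Ici hs0 (le_add_of_nonneg_left (Nat.cast_nonneg n))]
    push_cast
    ring_nf
  have hnorm : ∀ n : ℕ, ∫ u in Ioi (1:ℝ), ‖F n u‖ = ((n:ℝ) + 1) ^ (-s.re) / s.re := by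
    intro n
    have : ∀ u : ℝ, ‖F n u‖ = indicator (Ici ((n:ℝ)+1)) (fun v : ℝ => ‖(v:ℂ) ^ (-s-1)‖) u := by
      intro u; rw [hF]; exact norm_indicator_eq_indicator_norm _ _
    simp_rw [this]
    rw [setIntegral_indicator measurableSet_Ici]
    have hset : (Ioi (1:ℝ) ∩ Ici ((n:ℝ)+1) : Set ℝ) =ᵐ[volume] Ioi ((n:ℝ)+1) := by
      have h1 : (Ioi (1:ℝ) ∩ Ici ((n:ℝ)+1) : Set ℝ) =ᵐ[volume]
          (Ioi (1:ℝ) ∩ Ioi ((n:ℝ)+1) : Set ℝ) :=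
        ae_eq_set_inter (ae_eq_refl _) Ioi_ae_eq_Ici.symm
      rwa [Ioi_inter_Ioi, max_eq_right (le_add_of_nonneg_left (Nat.cast_nonneg n))] at h1
    rw [setIntegral_congr_set hset]
    have hcong : ∀ u ∈ Ioi ((n:ℝ)+1), ‖(u:ℂ) ^ (-s-1)‖ = u ^ (-s.re - 1) := by
      intro u hu
      have hu0 : (0:ℝ) < u := lt_trans (by positivity) hu
      rw [Complex.norm_cpow_eq_rpow_re_of_pos hu0, re_neg_sub]
    rw [setIntegral_congr_fun measurableSet_Ioi hcong,
      integral_Ioi_rpow_of_lt (by linarith) (by positivity)]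
    have : -s.re - 1 + 1 = -s.re := by ring
    rw [this, neg_div, ← div_neg, neg_neg]
  have hsum : Summable fun n : ℕ => ∫ u in Ioi (1:ℝ), ‖F n u‖ := by
    simp_rw [hnorm]
    apply Summable.div_const
    have h := (summable_nat_add_iff 1).2 (Real.summable_nat_rpow.2 (by linarith : -s.re < -1))
    refine h.congr fun n => ?_
    push_cast
    ring_nf
  have key := integral_tsum_of_summable_integral_norm hint hsum
  have hpt : ∀ u ∈ Ioi (1:ℝ), ∑' n, F n u = ((⌊u⌋₊ : ℝ) : ℂ) * (u:ℂ) ^ (-s-1) := by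
    intro u hu
    have hu0 : (0:ℝ) ≤ u := (one_pos.trans hu).le
    have hzero : ∀ n ∉ Finset.range ⌊u⌋₊, F n u = 0 := by
      intro n hn
      rw [Finset.mem_range, not_lt] at hn
      refine indicator_of_notMem ?_ _
      rw [mem_Ici, not_le]
      have : (⌊u⌋₊ : ℝ) ≤ (n : ℝ) := Nat.cast_le.2 hn
      calc u < (⌊u⌋₊ : ℝ) + 1 := Nat.lt_floor_add_one u
        _ ≤ (n : ℝ) + 1 := by linarith
    rw [tsum_eq_sum hzero]
    have hmem : ∀ n ∈ Finset.range ⌊u⌋₊, F n u = (u:ℂ) ^ (-s-1) := by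
      intro n hn
      rw [Finset.mem_range] at hn
      refine indicator_of_mem ?_ _
      rw [mem_Ici]
      have : ((n:ℕ) + 1 : ℕ) ≤ ⌊u⌋₊ := hn
      have := (Nat.le_floor_iff hu0).1 this
      push_cast at this
      linarith
    rw [Finset.sum_congr rfl hmem, Finset.sum_const, nsmul_eq_mul]
    norm_num
  rw [setIntegral_congr_fun measurableSet_Ioi hpt] at key
  rw [← key]
  rw [zeta_eq_tsum_one_div_nat_add_one_cpow hs]
  rw [← tsum_div_const]
  refine tsum_congr fun n => ?_
  rw [hval n, cpow_neg, one_div]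
lemma cpow_split {s : ℂ} {u : ℝ} (hu : 1 < u) :
    (u:ℂ) ^ (-s) = (u:ℂ) * (u:ℂ) ^ (-s - 1) := by
  have hu0 : (u:ℂ) ≠ 0 := by
    simp only [ne_eq, Complex.ofReal_eq_zero]
    linarith
  conv_lhs => rw [show -s = 1 + (-s - 1) by ring]
  rw [Complex.cpow_add _ _ hu0, Complex.cpow_one]

lemma fract_cast {u : ℝ} (hu : 1 < u) :
    ((Int.fract u : ℝ) : ℂ) = (u:ℂ) - ((⌊u⌋₊ : ℝ) : ℂ) := by
  have hu0 : (0:ℝ) ≤ u := by linarith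
  have h1 : ((⌊u⌋₊ : ℤ) : ℝ) = ((⌊u⌋ : ℤ) : ℝ) := by
    rw [Int.natCast_floor_eq_floor hu0]
  have h2 : Int.fract u = u - (⌊u⌋₊ : ℝ) := by
    rw [Int.fract]
    push_cast at h1 ⊢
    rw [← h1]
  rw [h2]
  push_cast
  ring

lemma zI_eq_of_one_lt {s : ℂ} (hs : 1 < s.re) :
    zI s = 1 / (s - 1) - riemannZeta s / s := by
  have hs0 : 0 < s.re := lt_trans one_pos hs
  have hre : (-s).re < -1 := by simp; linarith
  have hint1 : IntegrableOn (fun u : ℝ => (u:ℂ) ^ (-s)) (Ioi (1:ℝ)) :=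
    integrableOn_Ioi_cpow_of_lt hre one_pos
  have hzk := zker_integrableOn hs0
  have hptfl : ∀ u ∈ Ioi (1:ℝ),
      ((⌊u⌋₊ : ℝ) : ℂ) * (u:ℂ) ^ (-s - 1) = (u:ℂ) ^ (-s) - zker s u := by
    intro u hu
    rw [mem_Ioi] at hu
    rw [zker, fract_cast hu, cpow_split hu]
    ring
  have hfl : IntegrableOn (fun u : ℝ => ((⌊u⌋₊ : ℝ) : ℂ) * (u:ℂ) ^ (-s - 1)) (Ioi (1:ℝ)) := by
    have hsub : IntegrableOn (fun u : ℝ => (u:ℂ) ^ (-s) - zker s u) (Ioi (1:ℝ)) :=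
      hint1.sub hzk
    exact hsub.congr_fun (fun u hu => (hptfl u hu).symm) measurableSet_Ioi
  have hptz : ∀ u ∈ Ioi (1:ℝ),
      zker s u = (u:ℂ) ^ (-s) - ((⌊u⌋₊ : ℝ) : ℂ) * (u:ℂ) ^ (-s - 1) := by
    intro u hu
    rw [hptfl u hu]; ring
  have h1 : zI s = (∫ u in Ioi (1:ℝ), (u:ℂ) ^ (-s))
      - ∫ u in Ioi (1:ℝ), ((⌊u⌋₊ : ℝ) : ℂ) * (u:ℂ) ^ (-s - 1) := by
    rw [zI, setIntegral_congr_fun measurableSet_Ioi hptz, integral_sub hint1 hfl]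
  rw [h1, floor_integral hs, integral_Ioi_cpow_of_lt hre one_pos]
  congr 1
  rw [Complex.ofReal_one, Complex.one_cpow]
  rw [show -s + 1 = -(s - 1) by ring, div_neg, neg_div, neg_neg]
lemma zI_differentiableAt {s₀ : ℂ} (hs : 0 < s₀.re) : DifferentiableAt ℂ zI s₀ := by
  set σ := s₀.re with hσ
  set ε : ℝ := σ / 2 with hε
  have hε0 : 0 < ε := by positivity
  set bd : ℝ → ℝ := fun u => (4 / σ) * u ^ (-(σ/4) - 1) with hbd
  set F' : ℂ → ℝ → ℂ := fun x u =>
    ((Int.fract u : ℝ) : ℂ) * ((u:ℂ) ^ (-x - 1) * Complex.log (u:ℝ) * (-1)) with hF'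
  have hmeas : ∀ᶠ x in nhds s₀,
      AEStronglyMeasurable (fun u => zker x u) (volume.restrict (Ioi (1:ℝ))) :=
    Eventually.of_forall fun x => zker_meas x
  have hF'meas : AEStronglyMeasurable (F' s₀) (volume.restrict (Ioi (1:ℝ))) := by
    refine aesm_fract.mul (((aesm_cpow _).mul ?_).mul aestronglyMeasurable_const)
    exact (Complex.measurable_ofReal.clog).aestronglyMeasurable
  have hbound : ∀ᵐ u ∂(volume.restrict (Ioi (1:ℝ))),
      ∀ x ∈ Metric.ball s₀ ε, ‖F' x u‖ ≤ bd u := by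
    filter_upwards [ae_restrict_mem measurableSet_Ioi] with u hu x hx
    rw [mem_Ioi] at hu
    have hu0 : (0:ℝ) < u := one_pos.trans hu
    have hu1 : (1:ℝ) ≤ u := hu.le
    have hxre : σ / 2 ≤ x.re := by
      have h1 : |(x - s₀).re| ≤ ‖x - s₀‖ := Complex.abs_re_le_norm _
      have h2 : ‖x - s₀‖ < ε := by
        rw [Metric.mem_ball, Complex.dist_eq] at hx; exact hx
      have := abs_lt.1 (lt_of_le_of_lt h1 h2)
      rw [Complex.sub_re] at this
      rw [hε] at this
      linarith [this.1]
    have hfr : |Int.fract u| ≤ 1 := by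
      rw [_root_.abs_of_nonneg (Int.fract_nonneg u)]; exact (Int.fract_lt_one u).le
    have hlog : Complex.log (u:ℝ) = ((Real.log u : ℝ) : ℂ) := by
      rw [Complex.ofReal_log hu0.le]
    rw [hF']
    simp only [norm_mul, norm_neg, norm_one, mul_one]
    rw [Complex.norm_cpow_eq_rpow_re_of_pos hu0, re_neg_sub,
      hlog]
    simp only [Complex.norm_real, Real.norm_eq_abs]
    rw [_root_.abs_of_nonneg (Real.log_nonneg hu1)]
    have h3 : u ^ (-x.re - 1) ≤ u ^ (-(σ/2) - 1) :=
      Real.rpow_le_rpow_of_exponent_le hu1 (by linarith)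
    have h4 : Real.log u ≤ u ^ (σ/4) / (σ/4) :=
      Real.log_le_rpow_div hu0.le (by positivity)
    have h5 : (0:ℝ) ≤ u ^ (-x.re - 1) := Real.rpow_nonneg hu0.le _
    have h6 : (0:ℝ) ≤ Real.log u := Real.log_nonneg hu1
    calc |Int.fract u| * (u ^ (-x.re - 1) * Real.log u)
        ≤ 1 * (u ^ (-x.re - 1) * Real.log u) := by
          apply mul_le_mul_of_nonneg_right hfr (by positivity)
      _ = u ^ (-x.re - 1) * Real.log u := one_mul _
      _ ≤ u ^ (-(σ/2) - 1) * (u ^ (σ/4) / (σ/4)) := by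
          apply mul_le_mul h3 h4 h6 (Real.rpow_nonneg hu0.le _)
      _ = bd u := by
          rw [hbd]
          rw [div_eq_mul_inv (u ^ (σ/4)), ← mul_assoc, ← Real.rpow_add hu0]
          rw [show -(σ/2) - 1 + σ/4 = -(σ/4) - 1 by ring]
          ring
  have hbd_int : Integrable bd (volume.restrict (Ioi (1:ℝ))) := by
    apply Integrable.const_mul
    exact integrableOn_Ioi_rpow_of_lt (by linarith) one_pos
  have hderiv : ∀ᵐ u ∂(volume.restrict (Ioi (1:ℝ))),
      ∀ x ∈ Metric.ball s₀ ε, HasDerivAt (fun y => zker y u) (F' x u) x := by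
    filter_upwards [ae_restrict_mem measurableSet_Ioi] with u hu x _
    rw [mem_Ioi] at hu
    have hu0 : (u:ℂ) ≠ 0 := by
      simp only [ne_eq, Complex.ofReal_eq_zero]; intro h; rw [h] at hu; linarith
    have h1 : HasDerivAt (fun y : ℂ => -y - 1) (-1) x := by
      simpa using ((hasDerivAt_id x).neg.sub_const 1)
    have h2 : HasDerivAt (fun y : ℂ => (u:ℂ) ^ (-y - 1))
        ((u:ℂ) ^ (-x - 1) * Complex.log (u:ℝ) * (-1)) x :=
      HasDerivAt.const_cpow h1 (Or.inl hu0)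
    exact h2.const_mul _
  have := hasDerivAt_integral_of_dominated_loc_of_deriv_le (Metric.ball_mem_nhds s₀ hε0) hmeas
    (zker_integrableOn hs) hF'meas hbound hbd_int hderiv
  exact this.2.differentiableAt
lemma isPreconnected_U : IsPreconnected {s : ℂ | 0 < s.re ∧ s ≠ 1} := by
  set B1 : Set ℂ := {z | 0 < z.re ∧ z.re < 1} with hB1
  set B2 : Set ℂ := {z | 1 < z.re} with hB2
  set B3 : Set ℂ := {z | 0 < z.re ∧ 0 < z.im} with hB3
  set B4 : Set ℂ := {z | 0 < z.re ∧ z.im < 0} with hB4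
  have hc1 : Convex ℝ B1 := (convex_halfSpace_re_gt 0).inter (convex_halfSpace_re_lt 1)
  have hc2 : Convex ℝ B2 := convex_halfSpace_re_gt 1
  have hc3 : Convex ℝ B3 := (convex_halfSpace_re_gt 0).inter (convex_halfSpace_im_gt 0)
  have hc4 : Convex ℝ B4 := (convex_halfSpace_re_gt 0).inter (convex_halfSpace_im_lt 0)
  have h13 : IsPreconnected (B1 ∪ B3) := by
    apply IsPreconnected.union (Complex.mk (1/2) 1)
    · constructor <;> norm_num
    · constructor <;> norm_num
    · exact hc1.isPreconnected
    · exact hc3.isPreconnected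
  have h134 : IsPreconnected (B1 ∪ B3 ∪ B4) := by
    apply IsPreconnected.union (Complex.mk (1/2) (-1))
    · left; constructor <;> norm_num
    · constructor <;> norm_num
    · exact h13
    · exact hc4.isPreconnected
  have hall : IsPreconnected (B1 ∪ B3 ∪ B4 ∪ B2) := by
    apply IsPreconnected.union (Complex.mk 2 1)
    · left; right; constructor <;> norm_num
    · simp only [hB2, mem_setOf_eq]; norm_num
    · exact h134
    · exact hc2.isPreconnected
  have hset : {s : ℂ | 0 < s.re ∧ s ≠ 1} = B1 ∪ B3 ∪ B4 ∪ B2 := by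
    ext z
    simp only [mem_setOf_eq, mem_union, hB1, hB2, hB3, hB4]
    constructor
    · rintro ⟨hre, hne⟩
      rcases lt_trichotomy z.re 1 with h | h | h
      · exact Or.inl (Or.inl (Or.inl ⟨hre, h⟩))
      · rcases lt_trichotomy z.im 0 with h' | h' | h'
        · exact Or.inl (Or.inr ⟨hre, h'⟩)
        · exfalso; apply hne; apply Complex.ext <;> simp [h, h']
        · exact Or.inl (Or.inl (Or.inr ⟨hre, h'⟩))
      · exact Or.inr h
    · rintro (((⟨h1, h2⟩ | ⟨h1, h2⟩) | ⟨h1, h2⟩) | h)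
      · exact ⟨h1, fun hz => by rw [hz] at h2; simp at h2⟩
      · exact ⟨h1, fun hz => by rw [hz] at h2; simp at h2⟩
      · exact ⟨h1, fun hz => by rw [hz] at h2; simp at h2⟩
      · refine ⟨lt_trans one_pos h, fun hz => by rw [hz] at h; simp at h⟩
  rw [hset]
  exact hall

lemma zI_eq {s : ℂ} (hs : 0 < s.re) (hs1 : s ≠ 1) :
    zI s = 1 / (s - 1) - riemannZeta s / s := by
  set U : Set ℂ := {z : ℂ | 0 < z.re ∧ z ≠ 1} with hU
  have hUopen : IsOpen U := by
    have : U = (Complex.re ⁻¹' Ioi 0) ∩ {(1:ℂ)}ᶜ := by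
      ext z; simp [hU, mem_setOf_eq, and_comm]
    rw [this]
    exact (Complex.continuous_re.isOpen_preimage _ isOpen_Ioi).inter
      isClosed_singleton.isOpen_compl
  have hf : AnalyticOnNhd ℂ zI U := by
    apply DifferentiableOn.analyticOnNhd _ hUopen
    exact fun z hz => (zI_differentiableAt hz.1).differentiableWithinAt
  have hg : AnalyticOnNhd ℂ (fun z => 1 / (z - 1) - riemannZeta z / z) U := by
    apply DifferentiableOn.analyticOnNhd _ hUopen
    intro z hz
    have hz1 : z - 1 ≠ 0 := sub_ne_zero.2 hz.2
    have hz0 : z ≠ 0 := by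
      intro h; rw [h] at hz
      exact lt_irrefl (0:ℝ) (by simpa using hz.1)
    apply DifferentiableAt.differentiableWithinAt
    have d1 : DifferentiableAt ℂ (fun w : ℂ => 1 / (w - 1)) z := by
      apply DifferentiableAt.div
      · exact differentiableAt_const _
      · exact differentiableAt_id.sub (differentiableAt_const _)
      · exact hz1
    have d2 : DifferentiableAt ℂ (fun w : ℂ => riemannZeta w / w) z := by
      apply DifferentiableAt.div
      · exact differentiableAt_riemannZeta hz.2
      · exact differentiableAt_id
      · exact hz0
    exact d1.sub d2
  have h2U : (2:ℂ) ∈ U := by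
    refine ⟨by norm_num, by norm_num⟩
  have hfg : zI =ᶠ[nhds (2:ℂ)] fun z => 1 / (z - 1) - riemannZeta z / z := by
    have hopen : IsOpen {z : ℂ | 1 < z.re} :=
      Complex.continuous_re.isOpen_preimage _ isOpen_Ioi
    have hmem : {z : ℂ | 1 < z.re} ∈ nhds (2:ℂ) := by
      apply hopen.mem_nhds; norm_num
    filter_upwards [hmem] with z hz
    exact zI_eq_of_one_lt hz
  exact hf.eqOn_of_preconnected_of_eventuallyEq hg isPreconnected_U h2U hfg ⟨hs, hs1⟩
/-- For `s₁, …, sₙ ∈ ℂ` with `Re(s_j) > 0` and `s_j + conj s_k ≠ 1` for all `j, k`,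
the matrix with `(j,k)` entry
`1/(s_j + conj s_k - 1) - ζ(s_j + conj s_k)/(s_j + conj s_k)` is positive semidefinite. -/
theorem zeta_matrix_posSemidef (n : ℕ) (s : Fin n → ℂ)
    (hs : ∀ j, 0 < (s j).re)
    (hne : ∀ j k, s j + (starRingEnd ℂ) (s k) ≠ 1) :
    ∀ c : Fin n → ℂ,
      0 ≤ ∑ j : Fin n, ∑ k : Fin n,
        (1 / (s j + (starRingEnd ℂ) (s k) - 1)
            - riemannZeta (s j + (starRingEnd ℂ) (s k)) / (s j + (starRingEnd ℂ) (s k)))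
          * c j * (starRingEnd ℂ) (c k) := by
  intro c
  set T : Fin n → Fin n → ℂ := fun j k => s j + (starRingEnd ℂ) (s k) with hT
  have hTapp : ∀ j k, s j + (starRingEnd ℂ) (s k) = T j k := fun _ _ => rfl
  have hTre : ∀ j k, 0 < (T j k).re := by
    intro j k
    have h : (T j k).re = (s j).re + (s k).re := by
      simp [hT, Complex.add_re, Complex.conj_re]
    rw [h]
    exact add_pos (hs j) (hs k)
  have hTne : ∀ j k, T j k ≠ 1 := fun j k => hne j k
  set w : ℝ → Fin n → ℂ := fun u j => c j * (u:ℂ) ^ (-(s j)) with hw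
  set H : ℝ → ℝ := fun u => Int.fract u * u⁻¹ * Complex.normSq (∑ j, w u j) with hH
  have hpt : ∀ u ∈ Ioi (1:ℝ),
      ∑ j, ∑ k, zker (T j k) u * c j * (starRingEnd ℂ) (c k) = ((H u : ℝ) : ℂ) := by
    intro u hu
    rw [mem_Ioi] at hu
    have hu0 : (0:ℝ) < u := one_pos.trans hu
    have huC : (u:ℂ) ≠ 0 := by
      simp only [ne_eq, Complex.ofReal_eq_zero]; linarith
    have harg : (u:ℂ).arg ≠ Real.pi := by
      rw [Complex.arg_ofReal_of_nonneg hu0.le]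
      exact Real.pi_ne_zero.symm
    have key : ∀ j k, zker (T j k) u * c j * (starRingEnd ℂ) (c k)
        = ((Int.fract u : ℝ) : ℂ) * (u:ℂ)⁻¹ * (w u j * (starRingEnd ℂ) (w u k)) := by
      intro j k
      have hsplit : (u:ℂ) ^ (-(T j k) - 1)
          = (u:ℂ) ^ (-(s j)) * (starRingEnd ℂ) ((u:ℂ) ^ (-(s k))) * (u:ℂ)⁻¹ := by
        have h1 : -(T j k) - 1 = (-(s j)) + ((starRingEnd ℂ) (-(s k)) + (-1)) := by
          rw [hT]; simp only [map_neg]; ring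
        rw [h1, Complex.cpow_add _ _ huC, Complex.cpow_add _ _ huC]
        have h2 : (u:ℂ) ^ ((starRingEnd ℂ) (-(s k)))
            = (starRingEnd ℂ) ((u:ℂ) ^ (-(s k))) := by
          rw [Complex.cpow_conj _ _ harg, Complex.conj_ofReal]
        rw [h2, Complex.cpow_neg_one]
        ring
      rw [zker, hsplit, hw]
      simp only [map_mul]
      ring
    simp_rw [key]
    have h3 : ∑ j, ∑ k, ((Int.fract u : ℝ) : ℂ) * (u:ℂ)⁻¹ * (w u j * (starRingEnd ℂ) (w u k))
        = ((Int.fract u : ℝ) : ℂ) * (u:ℂ)⁻¹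
          * ((∑ j, w u j) * (starRingEnd ℂ) (∑ k, w u k)) := by
      rw [map_sum, Finset.sum_mul_sum]
      simp_rw [Finset.mul_sum]
    rw [h3, Complex.mul_conj, hH]
    push_cast
    ring
  have hInt : ∀ j k : Fin n, IntegrableOn
      (fun u : ℝ => zker (T j k) u * c j * (starRingEnd ℂ) (c k)) (Ioi (1:ℝ)) :=
    fun j k => ((zker_integrableOn (hTre j k)).mul_const _).mul_const _
  have hentry : ∀ j k : Fin n,
      (1 / (T j k - 1) - riemannZeta (T j k) / (T j k)) * c j * (starRingEnd ℂ) (c k)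
        = ∫ u in Ioi (1:ℝ), zker (T j k) u * c j * (starRingEnd ℂ) (c k) := by
    intro j k
    rw [← zI_eq (hTre j k) (hTne j k), zI, ← MeasureTheory.integral_mul_const,
      ← MeasureTheory.integral_mul_const]
  simp only [hTapp]
  calc (0:ℂ) ≤ ((∫ u in Ioi (1:ℝ), H u : ℝ) : ℂ) := by
        rw [Complex.zero_le_real]
        refine setIntegral_nonneg measurableSet_Ioi fun u hu => ?_
        rw [mem_Ioi] at hu
        have hu0 : (0:ℝ) < u := one_pos.trans hu
        rw [hH]
        have := Int.fract_nonneg u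
        have := Complex.normSq_nonneg (∑ j, w u j)
        positivity
    _ = ∫ u in Ioi (1:ℝ), ((H u : ℝ) : ℂ) := integral_ofReal.symm
    _ = ∫ u in Ioi (1:ℝ), ∑ j, ∑ k, zker (T j k) u * c j * (starRingEnd ℂ) (c k) :=
        (setIntegral_congr_fun measurableSet_Ioi hpt).symm
    _ = ∑ j, ∑ k, ∫ u in Ioi (1:ℝ), zker (T j k) u * c j * (starRingEnd ℂ) (c k) := by
        rw [MeasureTheory.integral_finset_sum _
          (fun j _ => integrable_finset_sum _ (fun k _ => hInt j k))]
        exact Finset.sum_congr rfl fun j _ =>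
          MeasureTheory.integral_finset_sum _ (fun k _ => hInt j k)
    _ = ∑ j, ∑ k, (1 / (T j k - 1) - riemannZeta (T j k) / (T j k)) * c j
          * (starRingEnd ℂ) (c k) := by
        exact Finset.sum_congr rfl fun j _ => Finset.sum_congr rfl fun k _ => (hentry j k).symm
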